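/- arXiv:math/0402424 — 2 statements merged into one kernel-verified Lean document; each statement's English description precedes it below -/
import Mathlib

section
/- If J_p ≠ {0} for some p ∈ {1,2,4}, then B = A, i.e. the derived subalgebra of the Lie algebra (A, [·,·]) is all of A. -/
namespace SuBlock

variable (F : Type*) [Field F]

def sigmaV : Fin 4 → F := ![1, 0, 1, 0]

def deltaV (d : F) : Fin 4 → F := ![0, 0, d, 0]

/-- The data `(Γ, J, δ)` of the paper: `δ₃ ∈ F \ {0}`, `Γ ≤ F⁴` an additive subgroup
containing `σ = (1,0,1,0)` and `δ = (0,0,δ₃,0)`, with `ker π₄ ⊄ ker π₂` whenever `π₂ ≠ 0`,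
and `J_p` encoded by `m p : Bool` (`J_p = ℕ` iff `m p = true`), with `J_q ≠ {0}`
whenever `π_q = 0`, for `q = 2,4`.  (Coordinates `1,2,3,4` are `Fin 4` indices `0,1,2,3`.) -/
structure Datum where
  d3 : F
  d3_ne : d3 ≠ 0
  Γ : AddSubgroup (Fin 4 → F)
  m : Fin 4 → Bool
  sigma_mem : sigmaV F ∈ Γ
  delta_mem : deltaV F d3 ∈ Γ
  ker_cond : (∃ α ∈ Γ, α 1 ≠ 0) → ∃ α ∈ Γ, α 3 = 0 ∧ α 1 ≠ 0
  J2_cond : (∀ α ∈ Γ, α 1 = 0) → m 1 = true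
  J4_cond : (∀ α ∈ Γ, α 3 = 0) → m 3 = true

variable {F}

/-- The monoid `J = J₁ × J₂ × J₃ × J₄ ⊆ ℕ⁴`, where `J_p = ℕ` if `m p = true` and
`J_p = {0}` otherwise. -/
def Jmon (m : Fin 4 → Bool) : AddSubmonoid (Fin 4 → ℕ) where
  carrier := {i | ∀ p, m p = false → i p = 0}
  zero_mem' := fun p _ => rfl
  add_mem' := fun ha hb p hp => by
    simp only [Set.mem_setOf_eq] at ha hb
    simp [Pi.add_apply, ha p hp, hb p hp]

/-- The commutative associative algebra `A = A(Γ,J)`, the semigroup algebra of `Γ × J`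
with basis `x^{α,i}`, `(α,i) ∈ Γ × J`. -/
abbrev Alg (D : Datum F) : Type _ := AddMonoidAlgebra F (↥D.Γ × ↥(Jmon D.m))

/-- The basis element `x^{α,i}`. -/
noncomputable def X (D : Datum F) (g : ↥D.Γ × ↥(Jmon D.m)) : Alg D :=
  AddMonoidAlgebra.single g 1

/-- `i - 1_[p]` (truncated subtraction). -/
def subE {m : Fin 4 → Bool} (i : ↥(Jmon m)) (p : Fin 4) : ↥(Jmon m) :=
  ⟨i.1 - Pi.single p 1, fun q hq => by
    have h : i.1 q = 0 := i.2 q hq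
    simp only [Pi.sub_apply, h, Nat.zero_sub]⟩

/-- `∂_p x^{α,i} = α_p x^{α,i} + i_p x^{α,i-1_[p]}` (coordinates are `Fin 4` indexed). -/
noncomputable def Dmon (D : Datum F) (p : Fin 4) (g : ↥D.Γ × ↥(Jmon D.m)) : Alg D :=
  (g.1.1 p) • X D g + ((g.2.1 p : F)) • X D (g.1, subE g.2 p)

/-- The derivation `∂_p` of `A`, extended linearly from its values on the basis. -/
noncomputable def Dop (D : Datum F) (p : Fin 4) (u : Alg D) : Alg D :=
  Finsupp.sum u.coeff fun g c => c • Dmon D p g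

/-- The Lie bracket (1.6):
`[u,v] = x^{σ,0}(∂₁(u)∂₂(v) − ∂₁(v)∂₂(u)) + (x^{δ,0}∂₃(u) + u)∂₄(v) − ∂₄(u)(x^{δ,0}∂₃(v) + v)`. -/
noncomputable def br (D : Datum F) (u v : Alg D) : Alg D :=
  X D (⟨sigmaV F, D.sigma_mem⟩, 0) * (Dop D 0 u * Dop D 1 v - Dop D 0 v * Dop D 1 u)
    + (X D (⟨deltaV F D.d3, D.delta_mem⟩, 0) * Dop D 2 u + u) * Dop D 3 v
    - Dop D 3 u * (X D (⟨deltaV F D.d3, D.delta_mem⟩, 0) * Dop D 2 v + v)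

/-- The derived subalgebra `B = [A,A]`, the span of all brackets. -/
noncomputable def Bspan (D : Datum F) : Submodule F (Alg D) :=
  Submodule.span F {w | ∃ u v : Alg D, w = br D u v}


section Helpers
variable {F : Type*} [Field F] (D : Datum F)

@[simp] lemma sigmaV_0 : sigmaV F 0 = 1 := rfl
@[simp] lemma sigmaV_1 : sigmaV F 1 = 0 := rfl
@[simp] lemma sigmaV_2 : sigmaV F 2 = 1 := rfl
@[simp] lemma sigmaV_3 : sigmaV F 3 = 0 := rfl

/-- `σ` as an element of `Γ`. -/
def sg : D.Γ := ⟨sigmaV F, D.sigma_mem⟩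

@[simp] lemma sg_def : (⟨sigmaV F, D.sigma_mem⟩ : D.Γ) = sg D := rfl

@[simp] lemma sg_coe (p : Fin 4) : ((sg D : D.Γ) : Fin 4 → F) p = sigmaV F p := rfl

/-- basis vector of `J` at an allowed slot -/
def eJ (p : Fin 4) (hp : D.m p = true) : Jmon D.m :=
  ⟨Pi.single p 1, fun q hq => by
    rcases eq_or_ne q p with rfl | h
    · rw [hp] at hq; cases hq
    · simp [Pi.single_eq_of_ne h]⟩

@[simp] lemma eJ_coe (p : Fin 4) (hp : D.m p = true) :
    ((eJ D p hp : Jmon D.m) : Fin 4 → ℕ) = Pi.single p 1 := rfl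

lemma subE_coe {m : Fin 4 → Bool} (k : Jmon m) (p q : Fin 4) :
    ((subE k p : Jmon m) : Fin 4 → ℕ) q = (k : Fin 4 → ℕ) q - (Pi.single p 1 : Fin 4 → ℕ) q := rfl

@[simp] lemma subE_zero {m : Fin 4 → Bool} (p : Fin 4) : subE (0 : Jmon m) p = 0 := by
  apply Subtype.ext; funext q
  simp [subE]

@[simp] lemma subE_eJ (p : Fin 4) (hp : D.m p = true) : subE (eJ D p hp) p = 0 := by
  apply Subtype.ext; funext q
  rcases eq_or_ne q p with rfl | h
  · simp [subE, eJ]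
  · simp [subE, eJ, Pi.single_eq_of_ne h]

lemma subE_add_eJ (k : Jmon D.m) (p : Fin 4) (hp : D.m p = true)
    (h : (k : Fin 4 → ℕ) p ≠ 0) : subE k p + eJ D p hp = k := by
  apply Subtype.ext; funext q
  rw [AddSubmonoid.coe_add, Pi.add_apply, eJ_coe, subE_coe]
  rcases eq_or_ne q p with rfl | hq
  · rw [Pi.single_eq_same]
    have := h; omega
  · rw [Pi.single_eq_of_ne hq]; omega

lemma subE_of_add_eJ (k : Jmon D.m) (p : Fin 4) (hp : D.m p = true) :
    subE (k + eJ D p hp) p = k := by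
  apply Subtype.ext; funext q
  rw [subE_coe, AddSubmonoid.coe_add, Pi.add_apply, eJ_coe]
  omega

lemma X_mul (a b : D.Γ × Jmon D.m) : X D a * X D b = X D (a + b) := by
  simp [X, AddMonoidAlgebra.single_mul_single]

lemma X_zero : X D 0 = (1 : Alg D) := by
  rw [X, AddMonoidAlgebra.one_def]

lemma Dop_X (p : Fin 4) (g : D.Γ × Jmon D.m) : Dop D p (X D g) = Dmon D p g := by
  unfold Dop X
  rw [AddMonoidAlgebra.coeff_single, Finsupp.sum_single_index (by rw [zero_smul]), one_smul]

lemma br_mem (u v : Alg D) : br D u v ∈ Bspan D :=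
  Submodule.subset_span ⟨u, v, rfl⟩

lemma smul_mem_cancel {c : F} (hc : c ≠ 0) {x : Alg D} (h : c • x ∈ Bspan D) :
    x ∈ Bspan D := by
  have h2 := Submodule.smul_mem (Bspan D) c⁻¹ h
  rwa [smul_smul, inv_mul_cancel₀ hc, one_smul] at h2

end Helpers

section DFour
variable {F : Type*} [Field F] (D : Datum F)

lemma Dmon_zero (p : Fin 4) : Dmon D p (0 : D.Γ × Jmon D.m) = 0 := by
  simp [Dmon]

lemma br_one (b : D.Γ × Jmon D.m) : br D (X D 0) (X D b) = Dmon D 3 b := by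
  rw [br]
  simp only [Dop_X, Dmon_zero, mul_zero, zero_mul, sub_zero, zero_sub, add_zero, zero_add]
  rw [X_zero, one_mul]

lemma Dmon3_mem (b : D.Γ × Jmon D.m) : Dmon D 3 b ∈ Bspan D := by
  rw [← br_one]; exact br_mem D _ _

lemma Dmon_pair (p : Fin 4) (g : D.Γ) (k : Jmon D.m) :
    Dmon D p (g, k) = ((g : Fin 4 → F) p) • X D (g, k)
      + (((k : Fin 4 → ℕ) p : F)) • X D (g, subE k p) := rfl

/-- all basis elements with `α₄ ≠ 0` lie in `B`. -/
lemma mem_of_g3_ne [CharZero F] (g : D.Γ) (hg : (g : Fin 4 → F) 3 ≠ 0) (k : Jmon D.m) :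
    X D (g, k) ∈ Bspan D := by
  suffices H : ∀ n (k : Jmon D.m), (k : Fin 4 → ℕ) 3 = n → X D (g, k) ∈ Bspan D from
    H _ k rfl
  intro n
  induction n with
  | zero =>
    intro k hk
    have h1 := Dmon3_mem D (g, k)
    rw [Dmon_pair, hk] at h1
    simp only [Nat.cast_zero, zero_smul, add_zero] at h1
    exact smul_mem_cancel D hg h1
  | succ n ih =>
    intro k hk
    have hsub : X D (g, subE k 3) ∈ Bspan D := by
      apply ih
      rw [subE_coe, hk, Pi.single_eq_same]
      omega
    have h1 := Dmon3_mem D (g, k)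
    rw [Dmon_pair] at h1
    have h2 := sub_mem h1 (Submodule.smul_mem (Bspan D) (((k : Fin 4 → ℕ) 3 : F)) hsub)
    rw [add_sub_cancel_right] at h2
    exact smul_mem_cancel D hg h2

/-- if `J₄ = ℕ`, all basis elements with `α₄ = 0` lie in `B`. -/
lemma mem_of_m3 [CharZero F] (hm : D.m 3 = true) (g : D.Γ) (hg : (g : Fin 4 → F) 3 = 0)
    (k : Jmon D.m) : X D (g, k) ∈ Bspan D := by
  have h1 := Dmon3_mem D (g, k + eJ D 3 hm)
  rw [Dmon_pair, hg, zero_smul, zero_add, subE_of_add_eJ] at h1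
  have hco : (((k + eJ D 3 hm : Jmon D.m) : Fin 4 → ℕ) 3 : F) ≠ 0 := by
    rw [AddSubmonoid.coe_add, Pi.add_apply, eJ_coe, Pi.single_eq_same]
    have : ((k : Fin 4 → ℕ) 3 + 1 : ℕ) ≠ 0 := Nat.succ_ne_zero _
    exact_mod_cast this
  exact smul_mem_cancel D hco h1

end DFour

section RelL2
variable {F : Type*} [Field F] (D : Datum F)

lemma rel_L2 (g : D.Γ) (k : Jmon D.m) (hg : (g : Fin 4 → F) 3 = 0)
    (hk : (k : Fin 4 → ℕ) 3 = 0) :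
    br D (X D (g - sg D - sg D, k)) (X D (sg D, 0)) =
      (-((g : Fin 4 → F) 1)) • X D (g, k)
        + (-(((k : Fin 4 → ℕ) 1 : F))) • X D (g, subE k 1) := by
  have e3a : Dmon D 3 (g - sg D - sg D, k) = 0 := by
    simp [Dmon_pair, hk, hg]
  have e3b : Dmon D 3 (sg D, (0 : Jmon D.m)) = 0 := by
    simp [Dmon_pair]
  rw [br]
  simp only [Dop_X, e3a, e3b, mul_zero, zero_mul, add_zero, sub_zero, zero_add]
  simp only [Dmon_pair]
  simp only [AddSubgroup.coe_sub, Pi.sub_apply, sg_coe, sigmaV_0, sigmaV_1,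
    ZeroMemClass.coe_zero, Pi.zero_apply, Nat.cast_zero, zero_smul, smul_zero,
    add_zero, zero_add, sub_zero, one_smul, sub_self]
  simp only [mul_add, add_mul, smul_mul_assoc, mul_smul_comm, X_mul, smul_smul, mul_zero,
    zero_mul, zero_sub, sub_zero]
  have i1 : ((sg D, (0 : Jmon D.m)) + ((sg D, 0) + (g - sg D - sg D, k))) = ((g, k) : D.Γ × Jmon D.m) :=
    Prod.ext_iff.mpr ⟨by show sg D + (sg D + (g - sg D - sg D)) = g; abel,
      by show (0 : Jmon D.m) + (0 + k) = k; simp⟩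
  have i2 : ((sg D, (0 : Jmon D.m)) + ((sg D, 0) + (g - sg D - sg D, subE k 1)))
      = ((g, subE k 1) : D.Γ × Jmon D.m) :=
    Prod.ext_iff.mpr ⟨by show sg D + (sg D + (g - sg D - sg D)) = g; abel,
      by show (0 : Jmon D.m) + (0 + subE k 1) = subE k 1; simp⟩
  simp only [sg_def, mul_neg, mul_add, mul_smul_comm, X_mul, i1, i2]
  module

end RelL2

section MemL2
variable {F : Type*} [Field F] (D : Datum F)

lemma subE_coe3 (k : Jmon D.m) (p : Fin 4) (hp : p ≠ 3) (hk : (k : Fin 4 → ℕ) 3 = 0) :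
    ((subE k p : Jmon D.m) : Fin 4 → ℕ) 3 = 0 := by
  rw [subE_coe, hk]; omega

lemma mem_L2 [CharZero F] (g : D.Γ) (hg3 : (g : Fin 4 → F) 3 = 0)
    (hg1 : (g : Fin 4 → F) 1 ≠ 0) (k : Jmon D.m) (hk3 : (k : Fin 4 → ℕ) 3 = 0) :
    X D (g, k) ∈ Bspan D := by
  suffices H : ∀ n (k : Jmon D.m), (k : Fin 4 → ℕ) 3 = 0 → (k : Fin 4 → ℕ) 1 = n →
      X D (g, k) ∈ Bspan D from H _ k hk3 rfl
  intro n
  induction n with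
  | zero =>
    intro k hk3 hk1
    have h := br_mem D (X D (g - sg D - sg D, k)) (X D (sg D, 0))
    rw [rel_L2 D g k hg3 hk3, hk1] at h
    simp only [Nat.cast_zero, neg_zero, zero_smul, add_zero] at h
    exact smul_mem_cancel D (neg_ne_zero.mpr hg1) h
  | succ n ih =>
    intro k hk3 hk1
    have hsub : X D (g, subE k 1) ∈ Bspan D := by
      apply ih
      · exact subE_coe3 D k 1 (by decide) hk3
      · rw [subE_coe, hk1, Pi.single_eq_same]; omega
    have h := br_mem D (X D (g - sg D - sg D, k)) (X D (sg D, 0))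
    rw [rel_L2 D g k hg3 hk3] at h
    have h2 := add_mem h (Submodule.smul_mem (Bspan D) (((k : Fin 4 → ℕ) 1 : F)) hsub)
    rw [show (-((g : Fin 4 → F) 1)) • X D (g, k)
          + (-(((k : Fin 4 → ℕ) 1 : F))) • X D (g, subE k 1)
          + ((k : Fin 4 → ℕ) 1 : F) • X D (g, subE k 1)
        = (-((g : Fin 4 → F) 1)) • X D (g, k) by module] at h2
    exact smul_mem_cancel D (neg_ne_zero.mpr hg1) h2

end MemL2

section RelL3
variable {F : Type*} [Field F] (D : Datum F)

lemma single_Fin_ne {a b : Fin 4} (h : b ≠ a) : (Pi.single a (1:ℕ) : Fin 4 → ℕ) b = 0 :=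
  Pi.single_eq_of_ne h 1

lemma rel_L3 (hm1 : D.m 1 = true) (g : D.Γ) (k : Jmon D.m) (hg3 : (g : Fin 4 → F) 3 = 0)
    (hg1 : (g : Fin 4 → F) 1 = 0) (hk3 : (k : Fin 4 → ℕ) 3 = 0) :
    br D (X D (g - sg D, k)) (X D ((0 : D.Γ), eJ D 1 hm1))
      - br D (X D (g - sg D - sg D, k)) (X D (sg D, eJ D 1 hm1))
    = X D (g, k) + ((k : Fin 4 → ℕ) 1 : F) • X D (g, subE k 1 + eJ D 1 hm1) := by
  have e3a : Dmon D 3 (g - sg D, k) = 0 := by simp [Dmon_pair, hk3, hg3]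
  have e3b : Dmon D 3 ((0 : D.Γ), eJ D 1 hm1) = 0 := by
    simp [Dmon_pair, single_Fin_ne (show (3:Fin 4) ≠ 1 by decide)]
  have e3c : Dmon D 3 (g - sg D - sg D, k) = 0 := by simp [Dmon_pair, hk3, hg3]
  have e3d : Dmon D 3 (sg D, eJ D 1 hm1) = 0 := by
    simp [Dmon_pair, single_Fin_ne (show (3:Fin 4) ≠ 1 by decide)]
  simp only [br]
  simp only [Dop_X, e3a, e3b, e3c, e3d, mul_zero, zero_mul, add_zero, sub_zero, zero_add]
  simp only [Dmon_pair]
  simp only [AddSubgroup.coe_sub, Pi.sub_apply, sg_coe, sigmaV_0, sigmaV_1,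
    ZeroMemClass.coe_zero, Pi.zero_apply, Nat.cast_zero, eJ_coe, Pi.single_eq_same,
    single_Fin_ne (show (0:Fin 4) ≠ 1 by decide), hg1,
    Nat.cast_one, zero_smul, smul_zero, add_zero, zero_add, sub_zero, zero_sub, sub_self,
    one_smul, neg_zero]
  simp only [subE_eJ, smul_zero, sub_zero, mul_add, mul_sub, add_mul, smul_mul_assoc,
    mul_smul_comm, X_mul, smul_smul, mul_zero, zero_mul, zero_sub, mul_neg, neg_zero,
    add_zero, zero_add, sg_def]
  have i1 : ((sg D, (0:Jmon D.m)) + ((g - sg D, k) + (0, 0))) = ((g, k) : D.Γ × Jmon D.m) :=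
    Prod.ext_iff.mpr ⟨by show sg D + (g - sg D + 0) = g; abel,
      by show (0:Jmon D.m) + (k + 0) = k; simp⟩
  have i2 : ((sg D, (0:Jmon D.m)) + ((g - sg D, subE k 0) + (0, 0)))
      = ((g, subE k 0) : D.Γ × Jmon D.m) :=
    Prod.ext_iff.mpr ⟨by show sg D + (g - sg D + 0) = g; abel,
      by show (0:Jmon D.m) + (subE k 0 + 0) = subE k 0; simp⟩
  have i3 : ((sg D, (0:Jmon D.m)) + ((g - sg D - sg D, k) + (sg D, 0)))
      = ((g, k) : D.Γ × Jmon D.m) :=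
    Prod.ext_iff.mpr ⟨by show sg D + (g - sg D - sg D + sg D) = g; abel,
      by show (0:Jmon D.m) + (k + 0) = k; simp⟩
  have i4 : ((sg D, (0:Jmon D.m)) + ((g - sg D - sg D, subE k 0) + (sg D, 0)))
      = ((g, subE k 0) : D.Γ × Jmon D.m) :=
    Prod.ext_iff.mpr ⟨by show sg D + (g - sg D - sg D + sg D) = g; abel,
      by show (0:Jmon D.m) + (subE k 0 + 0) = subE k 0; simp⟩
  have i5 : ((sg D, (0:Jmon D.m)) + ((sg D, eJ D 1 hm1) + (g - sg D - sg D, subE k 1)))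
      = ((g, subE k 1 + eJ D 1 hm1) : D.Γ × Jmon D.m) :=
    Prod.ext_iff.mpr ⟨by show sg D + (sg D + (g - sg D - sg D)) = g; abel,
      by show (0:Jmon D.m) + (eJ D 1 hm1 + subE k 1) = subE k 1 + eJ D 1 hm1
         rw [zero_add, add_comm]⟩
  rw [i1, i2, i3, i4, i5]
  module

end RelL3

section MemL3
variable {F : Type*} [Field F] (D : Datum F)

lemma mem_L3 [CharZero F] (hm1 : D.m 1 = true) (g : D.Γ) (hg3 : (g : Fin 4 → F) 3 = 0)
    (hg1 : (g : Fin 4 → F) 1 = 0) (k : Jmon D.m) (hk3 : (k : Fin 4 → ℕ) 3 = 0) :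
    X D (g, k) ∈ Bspan D := by
  have h := sub_mem (br_mem D (X D (g - sg D, k)) (X D ((0 : D.Γ), eJ D 1 hm1)))
    (br_mem D (X D (g - sg D - sg D, k)) (X D (sg D, eJ D 1 hm1)))
  rw [rel_L3 D hm1 g k hg3 hg1 hk3] at h
  by_cases hk1 : (k : Fin 4 → ℕ) 1 = 0
  · rw [hk1] at h
    simpa only [Nat.cast_zero, zero_smul, add_zero] using h
  · rw [subE_add_eJ D k 1 hm1 hk1,
      show X D (g, k) + ((k : Fin 4 → ℕ) 1 : F) • X D (g, k)
        = (1 + ((k : Fin 4 → ℕ) 1 : F)) • X D (g, k) by module] at h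
    apply smul_mem_cancel D _ h
    have h2 : ((1 + (k : Fin 4 → ℕ) 1 : ℕ) : F) ≠ 0 := Nat.cast_ne_zero.mpr (by omega)
    push_cast at h2
    exact h2

lemma rel_L3b (t g : D.Γ) (k : Jmon D.m) (hg3 : (g : Fin 4 → F) 3 = 0)
    (hg1 : (g : Fin 4 → F) 1 = 0) (ht3 : (t : Fin 4 → F) 3 = 0)
    (hk3 : (k : Fin 4 → ℕ) 3 = 0) (hk1 : (k : Fin 4 → ℕ) 1 = 0) :
    br D (X D (g - t - sg D, k)) (X D (t, 0)) =
      (((g : Fin 4 → F) 0 - 1) * (t : Fin 4 → F) 1) • X D (g, k)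
        + (((k : Fin 4 → ℕ) 0 : F) * (t : Fin 4 → F) 1) • X D (g, subE k 0) := by
  have e3a : Dmon D 3 (g - t - sg D, k) = 0 := by simp [Dmon_pair, hk3, hg3, ht3]
  have e3b : Dmon D 3 (t, (0 : Jmon D.m)) = 0 := by simp [Dmon_pair, ht3]
  simp only [br]
  simp only [Dop_X, e3a, e3b, mul_zero, zero_mul, add_zero, sub_zero, zero_add]
  simp only [Dmon_pair]
  simp only [AddSubgroup.coe_sub, Pi.sub_apply, sg_coe, sigmaV_0, sigmaV_1,
    ZeroMemClass.coe_zero, Pi.zero_apply, Nat.cast_zero, hg1, hk1,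
    Nat.cast_one, zero_smul, smul_zero, add_zero, zero_add, sub_zero, zero_sub, sub_self,
    one_smul, neg_zero]
  simp only [smul_zero, sub_zero, mul_add, mul_sub, add_mul, smul_mul_assoc,
    mul_smul_comm, X_mul, smul_smul, mul_zero, zero_mul, zero_sub, mul_neg, neg_zero,
    add_zero, zero_add, sg_def, neg_smul, neg_neg, sub_neg_eq_add]
  have i1 : ((sg D, (0:Jmon D.m)) + ((g - t - sg D, k) + (t, 0))) = ((g, k) : D.Γ × Jmon D.m) :=
    Prod.ext_iff.mpr ⟨by show sg D + (g - t - sg D + t) = g; abel,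
      by show (0:Jmon D.m) + (k + 0) = k; simp⟩
  have i2 : ((sg D, (0:Jmon D.m)) + ((g - t - sg D, subE k 0) + (t, 0)))
      = ((g, subE k 0) : D.Γ × Jmon D.m) :=
    Prod.ext_iff.mpr ⟨by show sg D + (g - t - sg D + t) = g; abel,
      by show (0:Jmon D.m) + (subE k 0 + 0) = subE k 0; simp⟩
  have i3 : ((sg D, (0:Jmon D.m)) + ((t, 0) + (g - t - sg D, k))) = ((g, k) : D.Γ × Jmon D.m) :=
    Prod.ext_iff.mpr ⟨by show sg D + (t + (g - t - sg D)) = g; abel,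
      by show (0:Jmon D.m) + (0 + k) = k; simp⟩
  rw [i1, i2, i3]
  module

end MemL3

section Final
variable {F : Type*} [Field F] (D : Datum F)

lemma mem_L3b [CharZero F] (hm0 : D.m 0 = true) (hm1 : D.m 1 = false) (t g : D.Γ)
    (ht3 : (t : Fin 4 → F) 3 = 0) (ht1 : (t : Fin 4 → F) 1 ≠ 0)
    (hg3 : (g : Fin 4 → F) 3 = 0) (hg1 : (g : Fin 4 → F) 1 = 0)
    (k : Jmon D.m) (hk3 : (k : Fin 4 → ℕ) 3 = 0) : X D (g, k) ∈ Bspan D := by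
  by_cases hg0 : (g : Fin 4 → F) 0 = 1
  · -- use `k + e₁`
    have hk3' : ((k + eJ D 0 hm0 : Jmon D.m) : Fin 4 → ℕ) 3 = 0 := by
      rw [AddSubmonoid.coe_add, Pi.add_apply, eJ_coe, hk3,
        single_Fin_ne (show (3:Fin 4) ≠ 0 by decide)]
    have hk1' : ((k + eJ D 0 hm0 : Jmon D.m) : Fin 4 → ℕ) 1 = 0 := by
      rw [AddSubmonoid.coe_add, Pi.add_apply, eJ_coe, k.2 1 hm1,
        single_Fin_ne (show (1:Fin 4) ≠ 0 by decide)]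
    have h := br_mem D (X D (g - t - sg D, k + eJ D 0 hm0)) (X D (t, 0))
    rw [rel_L3b D t g (k + eJ D 0 hm0) hg3 hg1 ht3 hk3' hk1', hg0, sub_self, zero_mul,
      zero_smul, zero_add, subE_of_add_eJ] at h
    apply smul_mem_cancel D ?_ h
    apply mul_ne_zero ?_ ht1
    have h2 : ((k + eJ D 0 hm0 : Jmon D.m) : Fin 4 → ℕ) 0 ≠ 0 := by
      rw [AddSubmonoid.coe_add, Pi.add_apply, eJ_coe, Pi.single_eq_same]; omega
    exact_mod_cast Nat.cast_ne_zero.mpr h2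
  · -- induction on `k 0`
    suffices H : ∀ n (k : Jmon D.m), (k : Fin 4 → ℕ) 3 = 0 → (k : Fin 4 → ℕ) 0 = n →
        X D (g, k) ∈ Bspan D from H _ k hk3 rfl
    have hco : ((g : Fin 4 → F) 0 - 1) * (t : Fin 4 → F) 1 ≠ 0 :=
      mul_ne_zero (sub_ne_zero.mpr hg0) ht1
    intro n
    induction n with
    | zero =>
      intro k hk3 hk0
      have h := br_mem D (X D (g - t - sg D, k)) (X D (t, 0))
      rw [rel_L3b D t g k hg3 hg1 ht3 hk3 (k.2 1 hm1), hk0] at h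
      simp only [Nat.cast_zero, zero_mul, zero_smul, add_zero] at h
      exact smul_mem_cancel D hco h
    | succ n ih =>
      intro k hk3 hk0
      have hsub : X D (g, subE k 0) ∈ Bspan D := by
        apply ih
        · exact subE_coe3 D k 0 (by decide) hk3
        · rw [subE_coe, hk0, Pi.single_eq_same]; omega
      have h := br_mem D (X D (g - t - sg D, k)) (X D (t, 0))
      rw [rel_L3b D t g k hg3 hg1 ht3 hk3 (k.2 1 hm1)] at h
      have h2 := sub_mem h (Submodule.smul_mem (Bspan D)
        (((k : Fin 4 → ℕ) 0 : F) * (t : Fin 4 → F) 1) hsub)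
      rw [add_sub_cancel_right] at h2
      exact smul_mem_cancel D hco h2

lemma X_mem [CharZero F] (h : D.m 0 = true ∨ D.m 1 = true ∨ D.m 3 = true)
    (g : D.Γ) (k : Jmon D.m) : X D (g, k) ∈ Bspan D := by
  by_cases hg3 : (g : Fin 4 → F) 3 = 0
  · by_cases hm3 : D.m 3 = true
    · exact mem_of_m3 D hm3 g hg3 k
    · have hm3f : D.m 3 = false := by simpa using hm3
      have hk3 : (k : Fin 4 → ℕ) 3 = 0 := k.2 3 hm3f
      by_cases hg1 : (g : Fin 4 → F) 1 = 0
      · by_cases hm1 : D.m 1 = true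
        · exact mem_L3 D hm1 g hg3 hg1 k hk3
        · have hm1f : D.m 1 = false := by simpa using hm1
          have hm0 : D.m 0 = true := by
            rcases h with h | h | h
            · exact h
            · rw [h] at hm1f; cases hm1f
            · rw [h] at hm3f; cases hm3f
          have hex : ∃ α ∈ D.Γ, α 1 ≠ 0 := by
            by_contra hco
            push_neg at hco
            rw [D.J2_cond hco] at hm1f
            cases hm1f
          obtain ⟨tv, htΓ, ht3, ht1⟩ := D.ker_cond hex
          exact mem_L3b D hm0 hm1f ⟨tv, htΓ⟩ g ht3 ht1 hg3 hg1 k hk3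
      · exact mem_L2 D g hg3 hg1 k hk3
  · exact mem_of_g3_ne D g hg3 k

end Final

/-- if `J_p ≠ {0}` for some `p ∈ {1,2,4}`, then `B = A`. -/
theorem derived_subalgebra_eq_top (F : Type*) [Field F] [CharZero F] (D : Datum F)
    (h : D.m 0 = true ∨ D.m 1 = true ∨ D.m 3 = true) :
    Bspan D = ⊤ := by
  rw [Submodule.eq_top_iff']
  intro u
  induction u using AddMonoidAlgebra.induction_linear with
  | zero => exact zero_mem _
  | add f g hf hg => exact add_mem hf hg
  | single a b =>
    have e : b • X D a = AddMonoidAlgebra.single a b := by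
      rw [X]
      show b • AddMonoidAlgebra.single a (1:F) = AddMonoidAlgebra.single a b
      rw [AddMonoidAlgebra.smul_single', mul_one]
    rw [← e]
    exact Submodule.smul_mem _ _ (X_mem D h a.1 a.2)

end SuBlock
end

section
/- The adjoint operator ad_1 (where 1 = x^{0,0} ∈ B) is a semisimple operator on B, i.e. B is spanned by eigenvectors of ad_1, if and only if J₄ = {0}. -/
namespace SuBlock

variable (F : Type*) [Field F]

variable {F}

variable {D : Datum F}

open scoped Classical

instance algCoeFun (D : Datum F) : CoeFun (Alg D) (fun _ => ↥D.Γ × ↥(Jmon D.m) → F) :=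
  ⟨fun v => v.coeff⟩

lemma X_apply (g h : ↥D.Γ × ↥(Jmon D.m)) : X D g h = if g = h then (1:F) else 0 :=
  Finsupp.single_apply

lemma dmon_apply (p : Fin 4) (g h : ↥D.Γ × ↥(Jmon D.m)) :
    Dmon D p g h = g.1.1 p * (if g = h then 1 else 0)
      + (g.2.1 p : F) * (if (g.1, subE g.2 p) = h then 1 else 0) := by
  show ((g.1.1 p • X D g) + ((g.2.1 p : F) • X D (g.1, subE g.2 p))) h = _
  have e1 : ∀ (u w : Alg D) (a : ↥D.Γ × ↥(Jmon D.m)), (u + w) a = u a + w a := fun _ _ _ => rfl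
  have e2 : ∀ (c : F) (u : Alg D) (a : ↥D.Γ × ↥(Jmon D.m)), (c • u) a = c * u a := fun _ _ _ => rfl
  rw [e1, e2, e2, X_apply, X_apply]

lemma ite_supp (v : Alg D) (a : ↥D.Γ × ↥(Jmon D.m)) (A : F) :
    (if a ∈ v.coeff.support then v a * A else 0) = v a * A := by
  split_ifs with h
  · rfl
  · rw [Finsupp.notMem_support_iff.mp h, zero_mul]

/-- `1_[4]` as an element of `Jmon`, when `m 3 = true`. -/
def oneJ (D : Datum F) (h3 : D.m 3 = true) : ↥(Jmon D.m) :=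
  ⟨Pi.single 3 1, fun q hq => by
    rcases eq_or_ne q 3 with rfl | hne
    · rw [h3] at hq; exact absurd hq (by simp)
    · exact Pi.single_eq_of_ne hne 1⟩

lemma add_oneJ_apply3 (h3 : D.m 3 = true) (j : ↥(Jmon D.m)) :
    (j + oneJ D h3).1 3 = j.1 3 + 1 := by
  show ((j.1 + Pi.single 3 1 : Fin 4 → ℕ)) 3 = j.1 3 + 1
  simp

lemma add_oneJ_fst (h3 : D.m 3 = true) (j : ↥(Jmon D.m)) (q : Fin 4) (hq : q ≠ 3) :
    (j + oneJ D h3).1 q = j.1 q := by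
  show ((j.1 + Pi.single 3 1 : Fin 4 → ℕ)) q = j.1 q
  simp [Pi.single_eq_of_ne hq]

lemma sub_oneJ (h3 : D.m 3 = true) (j : ↥(Jmon D.m)) :
    subE (j + oneJ D h3) 3 = j := by
  apply Subtype.ext
  show (j + oneJ D h3).1 - Pi.single 3 1 = j.1
  funext q
  rcases eq_or_ne q 3 with rfl | hne
  · rw [Pi.sub_apply, add_oneJ_apply3 h3 j]; simp
  · rw [Pi.sub_apply, add_oneJ_fst h3 j q hne, Pi.single_eq_of_ne hne]
    omega

lemma subE_apply3 (j : ↥(Jmon D.m)) : (subE j 3).1 3 = j.1 3 - 1 := by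
  show ((j.1 - Pi.single 3 1 : Fin 4 → ℕ)) 3 = j.1 3 - 1
  simp

lemma eq_add_oneJ_of_subE (h3 : D.m 3 = true) {j k : ↥(Jmon D.m)}
    (hne : j.1 3 ≠ 0) (h : subE j 3 = k) : j = k + oneJ D h3 := by
  apply Subtype.ext
  have hv : j.1 - Pi.single 3 1 = k.1 := congrArg Subtype.val h
  show j.1 = k.1 + Pi.single 3 1
  funext q
  have hq := congrFun hv q
  rcases eq_or_ne q 3 with rfl | hq3
  · simp only [Pi.sub_apply, Pi.single_eq_same, Pi.add_apply] at hq ⊢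
    omega
  · simp only [Pi.sub_apply, Pi.single_eq_of_ne hq3, Pi.add_apply] at hq ⊢
    omega

lemma dop3_apply_true (h3 : D.m 3 = true) (v : Alg D) (g : ↥D.Γ × ↥(Jmon D.m)) :
    Dop D 3 v g = g.1.1 3 * v g + ((g.2.1 3 : F) + 1) * v (g.1, g.2 + oneJ D h3) := by
  classical
  have hune : (g.1, g.2 + oneJ D h3) ≠ g := by
    intro hE
    have := congrArg (fun x : ↥D.Γ × ↥(Jmon D.m) => x.2.1 3) hE
    simp only at this
    rw [add_oneJ_apply3 h3 g.2] at this
    omega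
  rw [Dop, AddMonoidAlgebra.coeff_finsuppSum, Finsupp.sum_apply]
  have key : (v.coeff.sum fun h c => (c • Dmon D 3 h) g)
      = v.coeff.sum (fun h c => (if h = g then c * g.1.1 3 else 0)
          + (if h = (g.1, g.2 + oneJ D h3) then c * ((g.2.1 3 : F) + 1) else 0)) := by
    apply Finsupp.sum_congr
    intro h _
    have e2 : ∀ (c : F) (u : Alg D) (a : ↥D.Γ × ↥(Jmon D.m)), (c • u) a = c * u a :=
      fun _ _ _ => rfl
    rw [e2, dmon_apply]
    by_cases hg : h = g
    · subst hg
      rw [if_pos rfl, if_neg (fun hE : h = (h.1, h.2 + oneJ D h3) => hune hE.symm)]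
      have h2 : (h.2.1 3 : F) * (if (h.1, subE h.2 3) = h then 1 else 0) = 0 := by
        by_cases hc : (h.1, subE h.2 3) = h
        · have hz : h.2.1 3 = 0 := by
            have := congrArg (fun x : ↥D.Γ × ↥(Jmon D.m) => x.2.1 3) hc
            simp only [subE_apply3] at this
            omega
          rw [hz]; simp
        · rw [if_neg hc, mul_zero]
      rw [h2, if_pos rfl, add_zero, mul_one, add_zero, mul_comm]
    · rw [if_neg hg, if_neg hg, mul_zero, zero_add]
      by_cases hup : h = (g.1, g.2 + oneJ D h3)
      · have hcond : (h.1, subE h.2 3) = g := by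
          rw [hup]
          show ((g.1 : ↥D.Γ), subE (g.2 + oneJ D h3) 3) = g
          rw [sub_oneJ h3]
        have hcast : (h.2.1 3 : F) = (g.2.1 3 : F) + 1 := by
          rw [hup]
          show (((g.2 + oneJ D h3).1 3 : ℕ) : F) = _
          rw [add_oneJ_apply3 h3]; push_cast; ring
        rw [if_pos hcond, if_pos hup, hcast]; ring
      · rw [if_neg hup]
        by_cases hc : (h.1, subE h.2 3) = g
        · have hz : h.2.1 3 = 0 := by
            by_contra hnz
            apply hup
            have h1 : h.1 = g.1 := (Prod.ext_iff.mp hc).1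
            have h2 : subE h.2 3 = g.2 := (Prod.ext_iff.mp hc).2
            have h3' := eq_add_oneJ_of_subE h3 hnz h2
            rw [Prod.ext_iff]; exact ⟨h1, h3'⟩
          rw [hz, if_pos hc]; simp
        · rw [if_neg hc]; simp
  rw [key, Finsupp.sum_add, Finsupp.sum_ite_eq', Finsupp.sum_ite_eq', ite_supp, ite_supp]
  ring

lemma dop3_apply_false (h3 : D.m 3 = false) (v : Alg D) (g : ↥D.Γ × ↥(Jmon D.m)) :
    Dop D 3 v g = g.1.1 3 * v g := by
  classical
  rw [Dop, AddMonoidAlgebra.coeff_finsuppSum, Finsupp.sum_apply]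
  have key : (v.coeff.sum fun h c => (c • Dmon D 3 h) g)
      = v.coeff.sum (fun h c => if h = g then c * g.1.1 3 else 0) := by
    apply Finsupp.sum_congr
    intro h _
    have e2 : ∀ (c : F) (u : Alg D) (a : ↥D.Γ × ↥(Jmon D.m)), (c • u) a = c * u a :=
      fun _ _ _ => rfl
    rw [e2, dmon_apply]
    have hz : h.2.1 3 = 0 := h.2.2 3 h3
    rw [hz]
    by_cases hg : h = g
    · subst hg; simp
    · rw [if_neg hg, if_neg hg]; simp
  rw [key, Finsupp.sum_ite_eq', ite_supp]
  ring


lemma alg_smul_apply (c : F) (u : Alg D) (a : ↥D.Γ × ↥(Jmon D.m)) : (c • u) a = c * u a := rfl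
lemma alg_sub_apply (u w : Alg D) (a : ↥D.Γ × ↥(Jmon D.m)) : (u - w) a = u a - w a := rfl

lemma dop_zero (p : Fin 4) : Dop D p (0 : Alg D) = 0 := by simp [Dop]

lemma dop_add (p : Fin 4) (u v : Alg D) :
    Dop D p (u + v) = Dop D p u + Dop D p v := by
  unfold Dop
  rw [AddMonoidAlgebra.coeff_add, Finsupp.sum_add_index']
  · intro g; simp
  · intro g b1 b2; rw [add_smul]

lemma dop_smul (p : Fin 4) (c : F) (u : Alg D) :
    Dop D p (c • u) = c • Dop D p u := by
  unfold Dop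
  rw [AddMonoidAlgebra.coeff_smul, Finsupp.sum_smul_index, Finsupp.smul_sum]
  · simp [mul_smul]
  · intro g; simp

lemma dop_one (p : Fin 4) : Dop D p (1 : Alg D) = 0 := by
  show Dop D p (AddMonoidAlgebra.single 0 1) = 0
  unfold Dop
  rw [AddMonoidAlgebra.coeff_single, Finsupp.sum_single_index]
  · simp [Dmon]
  · simp

lemma br_one_s9 (v : Alg D) : br D (1 : Alg D) v = Dop D 3 v := by
  simp [br, dop_one]

lemma bspan_inv {v : Alg D} (hv : v ∈ Bspan D) : Dop D 3 v ∈ Bspan D := by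
  induction hv using Submodule.span_induction with
  | mem w hw =>
    obtain ⟨u1, v1, rfl⟩ := hw
    rw [← br_one_s9]
    exact Submodule.subset_span ⟨1, br D u1 v1, rfl⟩
  | zero => rw [dop_zero]; exact zero_mem _
  | add x y _ _ hx hy => rw [dop_add]; exact add_mem hx hy
  | smul c x _ hx => rw [dop_smul]; exact Submodule.smul_mem _ _ hx

/-- Forward: if `m 3 = false`, `B` is spanned by eigenvectors of `ad 1`. -/
lemma forward_aux (h3 : D.m 3 = false) (n : ℕ) :
    ∀ v : Alg D, v ∈ Bspan D → (v.coeff.support.image (fun g => g.1.1 3)).card = n →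
      v ∈ Submodule.span F
        {v : Alg D | v ∈ Bspan D ∧ ∃ c : F, br D (1 : Alg D) v = c • v} := by
  induction n using Nat.strong_induction_on with
  | _ n ih =>
    intro v hv hn
    by_cases hv0 : v = 0
    · rw [hv0]; exact zero_mem _
    have hsupp : v.coeff.support.Nonempty :=
        Finsupp.support_nonempty_iff.mpr (fun h => hv0 (AddMonoidAlgebra.coeff_eq_zero.mp h))
    obtain ⟨g0, hg0⟩ := hsupp
    rcases lt_or_ge n 2 with hlt | hge
    · -- all eigenvalues equal: v is an eigenvector
      set lam := g0.1.1 3 with hlam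
      have hone : ∀ a ∈ v.coeff.support.image (fun g => g.1.1 3),
          ∀ b ∈ v.coeff.support.image (fun g => g.1.1 3), a = b :=
        Finset.card_le_one.mp (by omega)
      have heig : br D (1 : Alg D) v = lam • v := by
        rw [br_one_s9]
        ext g
        rw [dop3_apply_false h3, alg_smul_apply]
        by_cases hg : v g = 0
        · rw [hg, mul_zero, mul_zero]
        · have : g.1.1 3 = lam :=
            hone _ (Finset.mem_image_of_mem _ (Finsupp.mem_support_iff.mpr hg)) _
              (Finset.mem_image_of_mem _ hg0)
          rw [this]
      exact Submodule.subset_span ⟨hv, lam, heig⟩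
    · -- at least two eigenvalues: split
      obtain ⟨lam, hlam, mu, hmu, hne⟩ := Finset.one_lt_card.mp (by omega :
        1 < (v.coeff.support.image (fun g => g.1.1 3)).card)
      set w1 := Dop D 3 v - lam • v with hw1
      set w2 := Dop D 3 v - mu • v with hw2
      have hw1m : w1 ∈ Bspan D := sub_mem (bspan_inv hv) (Submodule.smul_mem _ _ hv)
      have hw2m : w2 ∈ Bspan D := sub_mem (bspan_inv hv) (Submodule.smul_mem _ _ hv)
      have hw1a : ∀ g, w1 g = (g.1.1 3 - lam) * v g := by
        intro g; rw [hw1, alg_sub_apply, dop3_apply_false h3, alg_smul_apply]; ring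
      have hw2a : ∀ g, w2 g = (g.1.1 3 - mu) * v g := by
        intro g; rw [hw2, alg_sub_apply, dop3_apply_false h3, alg_smul_apply]; ring
      have hcard : ∀ (w : Alg D) (t : F), (∀ g, w g = (g.1.1 3 - t) * v g) →
          t ∈ v.coeff.support.image (fun g => g.1.1 3) →
          (w.coeff.support.image (fun g => g.1.1 3)).card < n := by
        intro w t hwa ht
        have hsub : w.coeff.support.image (fun g => g.1.1 3)
            ⊆ (v.coeff.support.image (fun g => g.1.1 3)).erase t := by
          intro x hx
          obtain ⟨g, hg, rfl⟩ := Finset.mem_image.mp hx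
          have hwg : w g ≠ 0 := Finsupp.mem_support_iff.mp hg
          rw [hwa g] at hwg
          have h1 : g.1.1 3 ≠ t := fun hE => hwg (by rw [hE, sub_self, zero_mul])
          have h2 : v g ≠ 0 := fun hE => hwg (by rw [hE, mul_zero])
          exact Finset.mem_erase.mpr ⟨h1,
            Finset.mem_image_of_mem _ (Finsupp.mem_support_iff.mpr h2)⟩
        calc (w.coeff.support.image (fun g => g.1.1 3)).card
            ≤ ((v.coeff.support.image (fun g => g.1.1 3)).erase t).card := Finset.card_le_card hsub
          _ < (v.coeff.support.image (fun g => g.1.1 3)).card :=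
              Finset.card_erase_lt_of_mem ht
          _ = n := hn
      have hm1 : w1 ∈ Submodule.span F
          {v : Alg D | v ∈ Bspan D ∧ ∃ c : F, br D (1 : Alg D) v = c • v} :=
        ih _ (hcard w1 lam hw1a hlam) w1 hw1m rfl
      have hm2 : w2 ∈ Submodule.span F
          {v : Alg D | v ∈ Bspan D ∧ ∃ c : F, br D (1 : Alg D) v = c • v} :=
        ih _ (hcard w2 mu hw2a hmu) w2 hw2m rfl
      have hveq : v = (mu - lam)⁻¹ • (w1 - w2) := by
        have h0 : (mu - lam) ≠ 0 := sub_ne_zero_of_ne (Ne.symm hne)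
        have : w1 - w2 = (mu - lam) • v := by
          ext g
          rw [alg_sub_apply, hw1a, hw2a, alg_smul_apply]; ring
        rw [this, smul_smul, inv_mul_cancel₀ h0, one_smul]
      rw [hveq]
      exact Submodule.smul_mem _ _ (sub_mem hm1 hm2)

/-- The chain `g, g+1_[4], g+2·1_[4], …`. -/
def upN (h3 : D.m 3 = true) (g : ↥D.Γ × ↥(Jmon D.m)) : ℕ → ↥D.Γ × ↥(Jmon D.m)
  | 0 => g
  | n + 1 => ((upN h3 g n).1, (upN h3 g n).2 + oneJ D h3)

lemma upN_fst (h3 : D.m 3 = true) (g : ↥D.Γ × ↥(Jmon D.m)) (n : ℕ) :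
    (upN h3 g n).1 = g.1 := by
  induction n with
  | zero => rfl
  | succ n ih => exact ih

lemma upN_coord (h3 : D.m 3 = true) (g : ↥D.Γ × ↥(Jmon D.m)) (n : ℕ) :
    (upN h3 g n).2.1 3 = g.2.1 3 + n := by
  induction n with
  | zero => rfl
  | succ n ih =>
    show ((upN h3 g n).2 + oneJ D h3).1 3 = _
    rw [add_oneJ_apply3 h3, ih]
    omega

lemma eigen_rel (h3 : D.m 3 = true) {v : Alg D} {c : F}
    (hev : Dop D 3 v = c • v) (g : ↥D.Γ × ↥(Jmon D.m)) :
    g.1.1 3 * v g + ((g.2.1 3 : F) + 1) * v (g.1, g.2 + oneJ D h3) = c * v g := by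
  have := congrArg (fun w : Alg D => w g) hev
  rw [dop3_apply_true h3, alg_smul_apply] at this
  exact this

lemma eigen_eigval (h3 : D.m 3 = true) [CharZero F] {v : Alg D} {c : F}
    (hev : Dop D 3 v = c • v) (g : ↥D.Γ × ↥(Jmon D.m)) (hvg : v g ≠ 0) :
    c = g.1.1 3 := by
  by_contra hne
  have hchain : ∀ n, v (upN h3 g n) ≠ 0 := by
    intro n
    induction n with
    | zero => exact hvg
    | succ n ih =>
      have hfst : (upN h3 g n).1 = g.1 := upN_fst h3 g n
      have hrel := eigen_rel h3 hev (upN h3 g n)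
      rw [hfst] at hrel
      have hgoal : upN h3 g (n + 1) = (g.1, (upN h3 g n).2 + oneJ D h3) := by
        show ((upN h3 g n).1, (upN h3 g n).2 + oneJ D h3) = _
        rw [hfst]
      rw [hgoal]
      intro hz
      rw [hz, mul_zero, add_zero] at hrel
      have h2 : (c - g.1.1 3) * v (upN h3 g n) = 0 := by linear_combination -hrel
      rcases mul_eq_zero.mp h2 with h | h
      · exact hne (sub_eq_zero.mp h)
      · exact ih h
  have hinj : Function.Injective (fun n => upN h3 g n) := by
    intro a b hab
    have := congrArg (fun x : ↥D.Γ × ↥(Jmon D.m) => x.2.1 3) hab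
    simp only [upN_coord] at this
    omega
  have hmem : ∀ n, (fun n => upN h3 g n) n ∈ (v.coeff.support : Set (↥D.Γ × ↥(Jmon D.m))) :=
    fun n => Finsupp.mem_support_iff.mpr (hchain n)
  exact (Set.infinite_of_injective_forall_mem hinj hmem) v.coeff.support.finite_toSet

lemma eigen_supp (h3 : D.m 3 = true) [CharZero F] {v : Alg D} {c : F}
    (hev : Dop D 3 v = c • v) (g : ↥D.Γ × ↥(Jmon D.m)) (hg3 : g.2.1 3 ≠ 0) :
    v g = 0 := by
  by_contra hvg
  have hc : c = g.1.1 3 := eigen_eigval h3 hev g hvg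
  have hg2 : g.2 = subE g.2 3 + oneJ D h3 := eq_add_oneJ_of_subE h3 hg3 rfl
  have hrel := eigen_rel h3 hev (g.1, subE g.2 3)
  have hupg : ((g.1, subE g.2 3).1, (g.1, subE g.2 3).2 + oneJ D h3) = g := by
    show (g.1, subE g.2 3 + oneJ D h3) = g
    rw [← hg2]
  rw [hupg] at hrel
  have hcast : (((g.1, subE g.2 3).2.1 3 : ℕ) : F) + 1 = (g.2.1 3 : F) := by
    show ((((subE g.2 3).1 3 : ℕ)) : F) + 1 = _
    rw [subE_apply3]
    have h1 : 1 ≤ g.2.1 3 := Nat.one_le_iff_ne_zero.mpr hg3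
    rw [Nat.cast_sub h1]
    push_cast; ring
  rw [hcast] at hrel
  have hfst : ((g.1, subE g.2 3) : ↥D.Γ × ↥(Jmon D.m)).1.1 3 = g.1.1 3 := rfl
  rw [hfst, ← hc] at hrel
  have : (g.2.1 3 : F) * v g = 0 := add_eq_left.mp hrel
  rcases mul_eq_zero.mp this with h | h
  · exact hg3 (Nat.cast_eq_zero.mp h)
  · exact hvg h

lemma reverse_aux (h3 : D.m 3 = true) [CharZero F] :
    ¬ (Bspan D ≤ Submodule.span F
        {v : Alg D | v ∈ Bspan D ∧ ∃ c : F, br D (1 : Alg D) v = c • v}) := by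
  intro hle
  -- the submodule of elements supported on `j₄ = 0`
  set U : Submodule F (Alg D) :=
    { carrier := {v | ∀ g : ↥D.Γ × ↥(Jmon D.m), g.2.1 3 ≠ 0 → v g = 0}
      zero_mem' := fun g _ => rfl
      add_mem' := fun {a b} ha hb g hg => by
        show a g + b g = 0
        rw [ha g hg, hb g hg, add_zero]
      smul_mem' := fun c a ha g hg => by
        show c * a g = 0
        rw [ha g hg, mul_zero] } with hU
  have hEU : Submodule.span F
      {v : Alg D | v ∈ Bspan D ∧ ∃ c : F, br D (1 : Alg D) v = c • v} ≤ U := by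
    rw [Submodule.span_le]
    rintro w ⟨-, c, hev⟩
    rw [br_one_s9] at hev
    exact fun g hg => eigen_supp h3 hev g hg
  -- the witness: `[x^{0, 2·1₄}, 1] = -2 x^{0,1₄}`
  set u : Alg D := X D (0, oneJ D h3 + oneJ D h3) with hu
  have hwB : br D u 1 ∈ Bspan D := Submodule.subset_span ⟨u, 1, rfl⟩
  set g0 : ↥D.Γ × ↥(Jmon D.m) := (0, oneJ D h3) with hg0
  have hg0ne : g0.2.1 3 ≠ 0 := by
    show (Pi.single (3 : Fin 4) 1 : Fin 4 → ℕ) 3 ≠ 0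
    simp
  have hbr : br D u 1 = -(Dop D 3 u) := by
    simp [br, dop_one]
  have hval : (Dop D 3 u) g0 = 2 := by
    rw [dop3_apply_true h3]
    have h1 : u g0 = 0 := by
      rw [hu, X_apply, if_neg]
      intro hE
      have := congrArg (fun x : ↥D.Γ × ↥(Jmon D.m) => x.2.1 3) hE
      rw [hg0] at this
      simp only at this
      rw [add_oneJ_apply3 h3] at this
      have h2 : (oneJ D h3).1 3 = 1 := by
        show (Pi.single (3 : Fin 4) 1 : Fin 4 → ℕ) 3 = 1
        simp
      rw [h2] at this
      omega
    have h2 : u (g0.1, g0.2 + oneJ D h3) = 1 := by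
      rw [hu, X_apply, if_pos rfl]
    rw [h1, h2, mul_zero, zero_add, mul_one]
    have h3' : (g0.2.1 3 : F) = 1 := by
      have : g0.2.1 3 = 1 := by
        show (Pi.single (3 : Fin 4) 1 : Fin 4 → ℕ) 3 = 1
        simp
      rw [this, Nat.cast_one]
    rw [h3']; ring
  have hz : br D u 1 g0 = 0 := hEU (hle hwB) g0 hg0ne
  rw [hbr] at hz
  have : (Dop D 3 u) g0 = 0 := by
    have hneg : (-(Dop D 3 u)) g0 = -((Dop D 3 u) g0) := rfl
    rw [hneg] at hz
    exact neg_eq_zero.mp hz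
  rw [hval] at this
  exact two_ne_zero this

/-- `ad_1` is a semisimple operator on `B` (i.e. `B` is spanned by
eigenvectors of `ad_1`) if and only if `J₄ = {0}`. -/
theorem ad_one_semisimple_iff (F : Type*) [Field F] [CharZero F] (D : Datum F) :
    (Bspan D ≤ Submodule.span F
        {v : Alg D | v ∈ Bspan D ∧ ∃ c : F, br D (1 : Alg D) v = c • v})
      ↔ D.m 3 = false := by
  constructor
  · intro hle
    by_contra hfalse
    have h3 : D.m 3 = true := by
      cases h : D.m 3
      · exact absurd h hfalse
      · rfl
    exact reverse_aux h3 hle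
  · intro h3
    intro v hv
    exact forward_aux h3 _ v hv rfl

end SuBlock
end
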